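/- Let M be a non-trivial self-dual irreducible kG-module over an algebraically closed field k of characteristic 2, with its (unique up to scalar) G-invariant symplectic form B. Let t ∈ G be an involution, and suppose B(tm, m) ≠ 0 for some m ∈ M. Then there exists a primitive idempotent f ∈ kG with kGf ≅ P(M) (the projective cover of M) such that the bilinear form B_t(x,y) = B₁(xt,y) on kG is non-degenerate on kGf. -/

import Mathlib

open Polynomial

open Module

private lemma simple_isSemisimple {R M : Type*} [Ring R] [AddCommGroup M] [Module R M]
    [IsSimpleModule R M] : IsSemisimpleModule R M := by
  apply IsSemisimpleModule.of_sSup_simples_eq_top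
  apply top_unique
  apply le_sSup
  show IsSimpleModule R (⊤ : Submodule R M)
  exact IsSimpleModule.congr Submodule.topEquiv

/-- Burnside: a subalgebra of `End k M` (given as image of an algebra hom) acting
irreducibly on a nontrivial f.d. space over an alg. closed field is everything. -/
private lemma burnside {k A M : Type*} [Field k] [IsAlgClosed k] [Ring A] [Algebra k A]
    [AddCommGroup M] [Module k M] [FiniteDimensional k M] [Nontrivial M]
    (φ : A →ₐ[k] Module.End k M)
    (hirr : ∀ N : Submodule k M, (∀ a : A, ∀ m ∈ N, φ a m ∈ N) → N = ⊥ ∨ N = ⊤) :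
    Function.Surjective φ := by
  letI : Module A M := Module.compHom M (φ.toRingHom : A →+* Module.End k M)
  have hsmul : ∀ (a : A) (x : M), a • x = φ a x := fun a x => rfl
  have hks : ∀ (c : k) (x : M), (algebraMap k A c) • x = c • x := by
    intro c x
    rw [hsmul, AlgHom.commutes]
    exact Module.algebraMap_end_apply k k M c x
  -- simplicity of M over A
  haveI hsimp : IsSimpleModule A M := by
    refine @IsSimpleModule.mk _ _ _ _ _ (IsSimpleOrder.mk ?_)
    intro N
    let N' : Submodule k M :=
      { carrier := N
        add_mem' := fun ha hb => N.add_mem ha hb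
        zero_mem' := N.zero_mem
        smul_mem' := by
          intro c x hx
          have := N.smul_mem (algebraMap k A c) hx
          rwa [hks] at this }
    have hcar : ∀ x : M, x ∈ N' ↔ x ∈ N := fun _ => Iff.rfl
    rcases hirr N' (fun a x hx => by
      have := N.smul_mem a ((hcar x).mp hx)
      rw [hsmul] at this; exact this) with h | h
    · left; apply le_antisymm _ bot_le
      intro x hx
      have : x ∈ N' := hx
      rw [h] at this; simpa using this
    · right; apply top_unique
      intro x _
      have : x ∈ N' := by rw [h]; trivial
      exact this
  haveI : IsSemisimpleModule A M := simple_isSemisimple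
  -- Schur
  have schur : ∀ T : M →ₗ[A] M, ∃ c : k, ∀ x, T x = c • x := by
    intro T
    let T' : Module.End k M :=
      { toFun := T
        map_add' := T.map_add
        map_smul' := by
          intro c x
          simp only [RingHom.id_apply]
          rw [← hks, T.map_smul, hks] }
    obtain ⟨c, hc⟩ := Module.End.exists_eigenvalue T'
    obtain ⟨v, hv⟩ := hc.exists_hasEigenvector
    refine ⟨c, ?_⟩
    -- the kernel of T - c• is an A-submodule
    let S : M →ₗ[A] M :=
      { toFun := fun x => T x - c • x
        map_add' := by
          intro x y
          show T (x+y) - c • (x+y) = (T x - c • x) + (T y - c • y)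
          rw [T.map_add, smul_add]; abel
        map_smul' := by
          intro a x
          simp only [RingHom.id_apply]
          show T (a • x) - c • (a • x) = a • (T x - c • x)
          rw [T.map_smul, smul_sub]
          congr 1
          rw [hsmul, hsmul, map_smul] }
    have hker : (LinearMap.ker S : Submodule A M) = ⊤ := by
      rcases hsimp.toIsSimpleOrder.2 (LinearMap.ker S) with h | h
      · exfalso
        have hvker : v ∈ LinearMap.ker S := by
          rw [LinearMap.mem_ker]
          show T v - c • v = 0
          have : T' v = c • v := Module.End.mem_eigenspace_iff.mp hv.1
          rw [show T v = T' v from rfl, this, sub_self]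
        rw [h] at hvker
        exact hv.2 (by simpa using hvker)
      · exact h
    intro x
    have : x ∈ LinearMap.ker S := by rw [hker]; trivial
    have := LinearMap.mem_ker.mp this
    have hx : T x - c • x = 0 := this
    have := sub_eq_zero.mp hx
    exact this
  -- density part
  classical
  set n := Module.finrank k M with hn
  let b : Basis (Fin n) k M := Module.finBasis k M
  let v : Fin n → M := fun i => b i
  let N : Submodule A (Fin n → M) := Submodule.span A {v}
  -- (Fin n → M) is a semisimple A-module
  haveI : IsSemisimpleModule A (Fin n → M) := by
    apply isSemisimpleModule_of_isSemisimpleModule_submodule'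
      (p := fun i : Fin n => LinearMap.range (LinearMap.single A (fun _ : Fin n => M) i))
    · intro i
      haveI : IsSimpleModule A
          ↥(LinearMap.range (LinearMap.single A (fun _ : Fin n => M) i)) :=
        IsSimpleModule.congr
          (LinearEquiv.ofInjective (LinearMap.single A (fun _ : Fin n => M) i)
            (by rw [LinearMap.coe_single]; exact Pi.single_injective i)).symm
      exact simple_isSemisimple
    · apply top_unique
      intro x _
      have hx : x = ∑ i : Fin n, Pi.single i (x i) := (Finset.univ_sum_single x).symm
      rw [hx]
      apply Submodule.sum_mem
      intro i _
      apply Submodule.mem_iSup_of_mem i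
      exact ⟨x i, rfl⟩
  have hN : N = ⊤ := by
    obtain ⟨C, hC⟩ := exists_isCompl N
    let pr := (N.subtype.comp (N.projectionOnto C hC) : (Fin n → M) →ₗ[A] (Fin n → M))
    let tau := (LinearMap.id - pr : (Fin n → M) →ₗ[A] (Fin n → M))
    -- components of tau are A-linear M → M, hence scalars
    have comp_scalar : ∀ (i j : Fin n), ∃ c : k, ∀ x : M,
        tau (Pi.single j x) i = c • x := by
      intro i j
      obtain ⟨c, hc⟩ := schur ((LinearMap.proj i).comp
        (tau.comp (LinearMap.single A (fun _ : Fin n => M) j)))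
      exact ⟨c, fun x => hc x⟩
    choose cm hcm using comp_scalar
    have htauv : tau v = 0 := by
      have hvN : v ∈ N := Submodule.mem_span_singleton_self v
      show v - pr v = 0
      have : pr v = v := by
        show (N.subtype (N.projectionOnto C hC v)) = v
        rw [show N.projectionOnto C hC v
            = N.projectionOnto C hC (⟨v, hvN⟩ : N) from rfl,
          Submodule.projectionOnto_apply_left]
        rfl
      rw [this, sub_self]
    have hc0 : ∀ i j, cm i j = 0 := by
      intro i j
      have hvi : v = ∑ l : Fin n, Pi.single l (v l) := (Finset.univ_sum_single v).symm
      have : (0 : M) = ∑ l : Fin n, cm i l • v l := by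
        calc (0:M) = tau v i := by rw [htauv]; rfl
        _ = tau (∑ l : Fin n, Pi.single l (v l)) i := by rw [← hvi]
        _ = ∑ l : Fin n, tau (Pi.single l (v l)) i := by
            rw [map_sum]; simp [Finset.sum_apply]
        _ = ∑ l : Fin n, cm i l • v l := by
            apply Finset.sum_congr rfl; intro l _; rw [hcm]
      have hlin := b.linearIndependent
      have hz : ∑ l : Fin n, cm i l • b l = 0 := by
        rw [← this]
      exact Fintype.linearIndependent_iff.mp hlin (fun l => cm i l) hz j
    -- tau = 0, so pr = id, so N = ⊤
    have htau0 : ∀ x : Fin n → M, tau x = 0 := by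
      intro x
      have hx : x = ∑ l : Fin n, Pi.single l (x l) := (Finset.univ_sum_single x).symm
      rw [hx, map_sum]
      apply Finset.sum_eq_zero
      intro l _
      funext i
      have h := hcm i l (x l)
      rw [hc0, zero_smul] at h
      simpa using h
    apply top_unique
    intro x _
    have : tau x = 0 := htau0 x
    have hpr : pr x = x := by
      have : x - pr x = 0 := this
      have := sub_eq_zero.mp this
      exact this.symm
    rw [← hpr]
    exact (N.projectionOnto C hC x).2
  -- conclude surjectivity
  intro T
  have hvN : (fun i : Fin n => T (b i)) ∈ N := by rw [hN]; trivial
  obtain ⟨a, ha⟩ := Submodule.mem_span_singleton.mp hvN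
  refine ⟨a, ?_⟩
  apply b.ext
  intro i
  have := congrFun ha i
  show φ a (b i) = T (b i)
  rw [← hsmul]
  exact this

section InvA
variable {k G : Type*} [Field k] [Group G]

private def invA (x : MonoidAlgebra k G) : MonoidAlgebra k G :=
  MonoidAlgebra.ofCoeff (Finsupp.equivMapDomain (Equiv.inv G) x.coeff)

private lemma invA_apply (x : MonoidAlgebra k G) (g : G) :
    (invA x).coeff g = x.coeff g⁻¹ := by
  show Finsupp.equivMapDomain (Equiv.inv G) x.coeff g = x.coeff g⁻¹
  rw [Finsupp.equivMapDomain_apply]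
  rfl

private lemma invA_single (g : G) (c : k) :
    invA (MonoidAlgebra.single g c) = MonoidAlgebra.single g⁻¹ c := by
  apply MonoidAlgebra.coeff_injective
  show Finsupp.equivMapDomain (Equiv.inv G) (Finsupp.single g c) = Finsupp.single g⁻¹ c
  rw [Finsupp.equivMapDomain_single]
  rfl

private lemma invA_add (x y : MonoidAlgebra k G) : invA (x + y) = invA x + invA y := by
  ext g; simp only [invA_apply, MonoidAlgebra.coeff_add, Finsupp.add_apply]

private lemma invA_zero : invA (0 : MonoidAlgebra k G) = 0 := by
  ext g; rw [invA_apply]; rfl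

private lemma invA_smul (c : k) (x : MonoidAlgebra k G) : invA (c • x) = c • invA x := by
  ext g; simp only [invA_apply, MonoidAlgebra.coeff_smul_apply]

private lemma invA_invA (x : MonoidAlgebra k G) : invA (invA x) = x := by
  ext g; rw [invA_apply, invA_apply, inv_inv]

private lemma invA_mul (x y : MonoidAlgebra k G) : invA (x * y) = invA y * invA x := by
  induction x using MonoidAlgebra.induction_linear with
  | zero => rw [zero_mul, invA_zero, mul_zero]
  | add f g hf hg => rw [add_mul, invA_add, invA_add, hf, hg, mul_add]
  | single a b =>
    induction y using MonoidAlgebra.induction_linear with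
    | zero => rw [mul_zero, invA_zero, zero_mul]
    | add f g hf hg => rw [mul_add, invA_add, invA_add, hf, hg, add_mul]
    | single c d =>
      show invA (MonoidAlgebra.single a b * MonoidAlgebra.single c d) = _
      rw [MonoidAlgebra.single_mul_single, invA_single, invA_single, invA_single,
        MonoidAlgebra.single_mul_single, mul_inv_rev, mul_comm d b]

end InvA

section Fitting
variable {k A : Type*} [Field k] [Ring A] [Algebra k A]

private lemma fitting (b : A) (hb : IsIntegral k b) :
    ∃ (v : ℕ) (q : Polynomial k), 1 ≤ v ∧ b ^ v = b ^ (2 * v) * aeval b q := by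
  obtain ⟨P, hPmonic, hP⟩ := hb
  have hP0 : P ≠ 0 := hPmonic.ne_zero
  obtain ⟨Q, hQ, hQnd⟩ := P.exists_eq_pow_rootMultiplicity_mul_and_not_dvd hP0 0
  rw [C_0, sub_zero] at hQ hQnd
  set w := P.rootMultiplicity 0 with hw
  have hc : Q.coeff 0 ≠ 0 := fun h => hQnd (X_dvd_iff.mpr h)
  set c := Q.coeff 0 with hcdef
  -- key : b ^ (w+1) = b ^ (w+2) * aeval b g
  set g : Polynomial k := C (-c⁻¹) * Q.divX with hg
  have hP' : aeval b P = 0 := by rw [aeval_def]; exact hP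
  have h1 : (0 : A) = b ^ w * aeval b Q := by
    rw [← hP', hQ, map_mul, map_pow, aeval_X]
  have h2 : aeval b Q = b * aeval b Q.divX + algebraMap k A c := by
    conv_lhs => rw [← X_mul_divX_add Q]
    rw [map_add, map_mul, aeval_X, aeval_C]
  have h3 : b ^ w * algebraMap k A c + b ^ (w+1) * aeval b Q.divX = 0 := by
    rw [h2, mul_add] at h1
    rw [add_comm, pow_succ, mul_assoc, ← h1]
  have key : b ^ (w + 1) = b ^ (w + 2) * aeval b g := by
    have h4 : b ^ w * algebraMap k A c = - (b ^ (w+1) * aeval b Q.divX) :=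
      eq_neg_of_add_eq_zero_left h3
    have h5 : b ^ (w+1) * algebraMap k A c = - (b ^ (w+2) * aeval b Q.divX) := by
      have := congrArg (fun z => b * z) h4
      simp only [mul_neg] at this ⊢
      calc b ^ (w+1) * algebraMap k A c = b * (b ^ w * algebraMap k A c) := by
            rw [← mul_assoc, ← pow_succ']
        _ = - (b * (b ^ (w+1) * aeval b Q.divX)) := this
        _ = - (b ^ (w+2) * aeval b Q.divX) := by rw [← mul_assoc, ← pow_succ']
    -- multiply by c⁻¹
    have h6 := congrArg (fun z => z * algebraMap k A c⁻¹) h5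
    simp only [neg_mul] at h6
    calc b ^ (w+1) = b ^ (w+1) * algebraMap k A (c * c⁻¹) := by
          rw [mul_inv_cancel₀ hc, map_one, mul_one]
      _ = b ^ (w+1) * algebraMap k A c * algebraMap k A c⁻¹ := by
          rw [map_mul, mul_assoc]
      _ = - (b ^ (w+2) * aeval b Q.divX * algebraMap k A c⁻¹) := h6
      _ = b ^ (w+2) * aeval b g := by
          rw [hg, map_mul, aeval_C, map_neg, neg_mul, mul_neg, mul_assoc,
            Algebra.commutes]
  -- iterate
  set v := w + 1 with hv
  have hkey : b ^ v = b ^ (v + 1) * aeval b g := by rw [hv]; exact key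
  have hiter : ∀ j : ℕ, b ^ v = b ^ (j + v) * (aeval b g) ^ j := by
    intro j
    induction j with
    | zero => rw [zero_add, pow_zero, mul_one]
    | succ j ih =>
      rw [ih]
      calc b ^ (j + v) * aeval b g ^ j
          = b ^ j * b ^ v * aeval b g ^ j := by rw [pow_add]
        _ = b ^ j * (b ^ (v+1) * aeval b g) * aeval b g ^ j := by rw [← hkey]
        _ = (b ^ j * b ^ (v+1)) * (aeval b g * aeval b g ^ j) := by
            rw [mul_assoc, mul_assoc, mul_assoc]
        _ = b ^ (j + 1 + v) * aeval b g ^ (j + 1) := by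
            rw [← pow_add, ← pow_succ']
            congr 2
            omega
  refine ⟨v, g ^ v, by omega, ?_⟩
  have := hiter v
  rw [map_pow]
  rw [this]
  congr 2
  omega

end Fitting

section MkIdem
variable {k A E : Type*} [Field k] [Ring A] [Algebra k A] [Ring E] [Algebra k E]

private lemma sigma_pow (σ : A → A) (hσmul : ∀ x y : A, σ (x * y) = σ y * σ x)
    (b : A) (hσb : σ b = b) : ∀ n : ℕ, 1 ≤ n → σ (b ^ n) = b ^ n := by
  intro n
  induction n with
  | zero => omega
  | succ n ih =>
    intro _
    rcases Nat.eq_zero_or_pos n with h | h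
    · subst h; rw [pow_one, hσb]
    · rw [pow_succ, hσmul, hσb, ih h, ← pow_succ']
      exact pow_succ b n

private lemma sigma_aeval (σ : A → A) (hσmul : ∀ x y : A, σ (x * y) = σ y * σ x)
    (hσadd : ∀ x y : A, σ (x + y) = σ x + σ y)
    (hσsmul : ∀ (c : k) (x : A), σ (c • x) = c • σ x)
    (hσ1 : σ (1 : A) = 1)
    (b : A) (hσb : σ b = b) (q : Polynomial k) :
    σ (aeval b q) = aeval b q := by
  induction q using Polynomial.induction_on with
  | C c => rw [aeval_C, Algebra.algebraMap_eq_smul_one, hσsmul, hσ1]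
  | add p q hp hq => rw [map_add, hσadd, hp, hq]
  | monomial n c _ =>
    rw [map_mul, map_pow, aeval_C, aeval_X, Algebra.algebraMap_eq_smul_one,
      smul_mul_assoc, one_mul, hσsmul,
      sigma_pow σ hσmul b hσb (n+1) (by omega)]

private lemma idem_pow (p : E) (hpp : p * p = p) : ∀ n : ℕ, 1 ≤ n → p ^ n = p := by
  intro n
  induction n with
  | zero => omega
  | succ n ih =>
    intro _
    rcases Nat.eq_zero_or_pos n with h | h
    · rw [h, pow_one]
    · rw [pow_succ, ih h, hpp]

private lemma mk_idem (φ : A →ₐ[k] E) (σ : A → A)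
    (hσmul : ∀ x y : A, σ (x * y) = σ y * σ x)
    (hσadd : ∀ x y : A, σ (x + y) = σ x + σ y)
    (hσsmul : ∀ (c : k) (x : A), σ (c • x) = c • σ x)
    (hσσ : ∀ x, σ (σ x) = x)
    (hσ1 : σ (1 : A) = 1)
    (hint : ∀ b : A, IsIntegral k b)
    (p : E) (hpp : p * p = p)
    (hpadj : ∀ x : A, φ x = p → φ (σ x) = p)
    (e w : A) (hee : e * e = e) (hσe : σ e = e)
    (hew : e * w = w) (hwe : w * e = w) (hφw : φ w = p) :
    ∃ e' y : A, e' * e' = e' ∧ σ e' = e' ∧ φ e' = p ∧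
      e * e' = e' ∧ e' * e = e' ∧ e' = w * y := by
  classical
  set a := w * σ w with ha
  have hσa : σ a = a := by rw [ha, hσmul, hσσ]
  have hφa : φ a = p := by rw [ha, map_mul, hφw, hpadj w hφw, hpp]
  have hea : e * a = a := by rw [ha, ← mul_assoc, hew]
  have hae : a * e = a := by
    have h1 : σ w * e = σ w := by
      have := hσmul e w
      rw [hew, hσe] at this
      exact this.symm
    rw [ha, mul_assoc, h1]
  obtain ⟨v, q, hv1, hkey⟩ := fitting a (hint a)
  have hcomm : a * aeval a q = aeval a q * a := by
    have h1 : aeval a (X * q) = aeval a (q * X) := by rw [mul_comm]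
    rw [map_mul, map_mul, aeval_X] at h1
    exact h1
  have hc : Commute a (aeval a q) := hcomm
  have hcommpow : a ^ v * aeval a q = aeval a q * a ^ v := (hc.pow_left v).eq
  have hv' : v = (v-1) + 1 := by omega
  refine ⟨a ^ v * aeval a q, σ w * a ^ (v-1) * aeval a q, ?_, ?_, ?_, ?_, ?_, ?_⟩
  · -- idempotent
    calc (a ^ v * aeval a q) * (a ^ v * aeval a q)
        = a ^ v * (aeval a q * a ^ v) * aeval a q := by
          simp only [mul_assoc]
      _ = a ^ v * (a ^ v * aeval a q) * aeval a q := by rw [← hcommpow]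
      _ = (a ^ (2*v) * aeval a q) * aeval a q := by
          rw [← mul_assoc, ← pow_add, two_mul]
      _ = a ^ v * aeval a q := by rw [← hkey]
  · -- sigma-fixed
    rw [hσmul, sigma_aeval σ hσmul hσadd hσsmul hσ1 a hσa q,
      sigma_pow σ hσmul a hσa v hv1, ← hcommpow]
  · -- image p
    have hφav : ∀ m : ℕ, 1 ≤ m → φ (a ^ m) = p := fun m hm => by
      rw [map_pow, hφa, idem_pow p hpp m hm]
    calc φ (a ^ v * aeval a q) = φ (a ^ v) * φ (aeval a q) := by rw [map_mul]
      _ = φ (a ^ (2*v)) * φ (aeval a q) := by rw [hφav v hv1, hφav (2*v) (by omega)]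
      _ = φ (a ^ (2*v) * aeval a q) := (map_mul φ _ _).symm
      _ = φ (a ^ v) := by rw [← hkey]
      _ = p := hφav v hv1
  · -- e * e' = e'
    have h2 : e * a ^ v = a ^ v := by
      conv_lhs => rw [hv', pow_succ', ← mul_assoc, hea]
      rw [← pow_succ', ← hv']
    rw [← mul_assoc, h2]
  · -- e' * e = e'
    have h2 : a ^ v * e = a ^ v := by
      conv_lhs => rw [hv', pow_succ, mul_assoc, hae]
      rw [← pow_succ, ← hv']
    rw [hcommpow, mul_assoc, h2, ← hcommpow]
  · -- e' = w * y
    calc a ^ v * aeval a q = (a * a ^ (v-1)) * aeval a q := by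
          conv_lhs => rw [hv', pow_succ']
      _ = ((w * σ w) * a ^ (v-1)) * aeval a q := by rw [ha]
      _ = w * (σ w * a ^ (v-1) * aeval a q) := by simp only [mul_assoc]

end MkIdem

private lemma conv_apply {k G : Type*} [Field k] [Group G] [Fintype G]
    (z w : MonoidAlgebra k G) (s : G) :
    (z * w).coeff s = ∑ g : G, z.coeff g * w.coeff (g⁻¹ * s) := by
  induction z using MonoidAlgebra.induction_linear with
  | zero => simp
  | add f g hf hg =>
    rw [add_mul, MonoidAlgebra.coeff_add, Finsupp.add_apply, hf, hg, ← Finset.sum_add_distrib]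
    apply Finset.sum_congr rfl
    intro g' _
    rw [MonoidAlgebra.coeff_add, Finsupp.add_apply, add_mul]
  | single a b =>
    rw [MonoidAlgebra.coeff_single_mul_apply]
    rw [Finset.sum_eq_single a]
    · rw [MonoidAlgebra.coeff_single, Finsupp.single_eq_same]
    · intro g' _ hne
      simp [MonoidAlgebra.coeff_single_apply, Ne.symm hne]
    · intro h; exact absurd (Finset.mem_univ a) h

/-- If `M` is a non-trivial self-dual irreducible `kG`-module (char 2, k algebraically
closed) with `G`-invariant symplectic form `B`, and `t ∈ G` is an involution with
`B(tm, m) ≠ 0` for some `m`, then there is a primitive idempotent `f ∈ kG` with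
`kGf ≅ P(M)` (i.e. `f` acts non-trivially on `M`) such that `B_t(x,y) = B₁(xt,y)` is
non-degenerate on `kGf`. -/
theorem stmt17 {k G M : Type*} [Field k] [CharP k 2] [IsAlgClosed k] [Group G] [Fintype G]
    [AddCommGroup M] [Module k M] [FiniteDimensional k M] [Nontrivial M]
    (ρ : Representation k G M)
    (hirr : ∀ N : Submodule k M, (∀ g : G, ∀ m ∈ N, ρ g m ∈ N) → N = ⊥ ∨ N = ⊤)
    (hnontriv : ∃ (g : G) (m : M), ρ g m ≠ m)
    (B : M →ₗ[k] M →ₗ[k] k)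
    (halt : ∀ m : M, B m m = 0)
    (hnd : ∀ m : M, (∀ m' : M, B m m' = 0) → m = 0)
    (hinv : ∀ (g : G) (m₁ m₂ : M), B (ρ g m₁) (ρ g m₂) = B m₁ m₂)
    (t : G) (ht : t * t = 1) (ht1 : t ≠ 1)
    (hBt : ∃ m : M, B (ρ t m) m ≠ 0) :
    ∃ f : MonoidAlgebra k G,
      -- f is a primitive idempotent
      f * f = f ∧ f ≠ 0 ∧
      (∀ e₁ e₂ : MonoidAlgebra k G, e₁ * e₁ = e₁ → e₂ * e₂ = e₂ →
        e₁ * e₂ = 0 → e₂ * e₁ = 0 → e₁ + e₂ = f → e₁ = 0 ∨ e₂ = 0) ∧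
      -- kGf ≅ P(M), i.e. f does not annihilate the simple module M
      (∃ m : M, ρ.asAlgebraHom f m ≠ 0) ∧
      -- B_t is non-degenerate on kGf
      (∀ x : MonoidAlgebra k G,
        (∀ y : MonoidAlgebra k G,
          (∑ g : G, (x * f * MonoidAlgebra.of k G t).coeff g * (y * f).coeff g) = 0) →
        x * f = 0) := by
  classical
  obtain ⟨m₀, hm₀⟩ := hBt
  -- ρ t is an involution
  have htt : ∀ x : M, ρ t (ρ t x) = x := by
    intro x
    calc ρ t (ρ t x) = (ρ t * ρ t) x := rfl
      _ = ρ (t * t) x := by rw [← map_mul]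
      _ = x := by rw [ht, map_one]; rfl
  -- B is symmetric
  have hBsym : ∀ x y : M, B x y = B y x := by
    intro x y
    have h := halt (x + y)
    simp only [map_add, LinearMap.add_apply] at h
    rw [halt x, halt y, zero_add, add_zero] at h
    have h2 : B x y = - B y x := eq_neg_of_add_eq_zero_right h
    rw [h2, CharTwo.neg_eq]
  have hDsym : ∀ x y : M, B (ρ t x) y = B (ρ t y) x := by
    intro x y
    calc B (ρ t x) y = B y (ρ t x) := hBsym _ _
      _ = B (ρ t y) (ρ t (ρ t x)) := (hinv t y (ρ t x)).symm
      _ = B (ρ t y) x := by rw [htt]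
  -- normalize m₀ to m with B (ρ t m) m = 1
  obtain ⟨s, hs⟩ := IsAlgClosed.exists_pow_nat_eq (B (ρ t m₀) m₀) (n := 2) (by norm_num)
  have hs0 : s ≠ 0 := by
    intro h
    rw [h] at hs
    apply hm₀
    rw [← hs]
    norm_num
  set m := s⁻¹ • m₀ with hmdef
  have hmm : B (ρ t m) m = 1 := by
    rw [hmdef]
    simp only [map_smul, LinearMap.smul_apply, smul_eq_mul]
    rw [← hs]
    field_simp
  have hm0 : m ≠ 0 := by
    intro h
    rw [h] at hmm
    simp at hmm
  -- the rank one projection p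
  set p : Module.End k M := LinearMap.smulRight (B (ρ t m)) m with hpdef
  have hp_apply : ∀ x, p x = B (ρ t m) x • m := fun x => rfl
  have hpm : p m = m := by rw [hp_apply, hmm, one_smul]
  have hpp : p * p = p := by
    apply LinearMap.ext
    intro x
    show p (p x) = p x
    rw [hp_apply x, hp_apply, map_smul, smul_eq_mul, hmm, mul_one]
  have hp0 : p ≠ 0 := by
    intro h
    apply hm0
    rw [← hpm, h]
    rfl
  -- Burnside
  have hsurj : Function.Surjective ρ.asAlgebraHom := by
    apply burnside
    intro N hN
    apply hirr N
    intro g x hx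
    have := hN (MonoidAlgebra.single g 1) x hx
    rwa [Representation.asAlgebraHom_single, one_smul] at this
  obtain ⟨u, hu⟩ := hsurj p
  -- sigma
  set S : MonoidAlgebra k G := MonoidAlgebra.single t 1 with hSdef
  have hSS : S * S = 1 := by
    rw [hSdef, MonoidAlgebra.single_mul_single, ht, mul_one]
    rfl
  set σ : MonoidAlgebra k G → MonoidAlgebra k G := fun x => S * invA x * S with hσdef
  have hσ_app : ∀ x, σ x = S * invA x * S := fun x => rfl
  have hσadd : ∀ x y, σ (x + y) = σ x + σ y := by
    intro x y
    rw [hσ_app, hσ_app, hσ_app, invA_add, mul_add, add_mul]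
  have hσsmul : ∀ (c : k) (x : MonoidAlgebra k G), σ (c • x) = c • σ x := by
    intro c x
    rw [hσ_app, hσ_app, invA_smul, mul_smul_comm, smul_mul_assoc]
  have hσ0 : σ 0 = 0 := by
    rw [hσ_app, invA_zero, mul_zero, zero_mul]
  have hσ1 : σ (1 : MonoidAlgebra k G) = 1 := by
    rw [hσ_app]
    have : invA (1 : MonoidAlgebra k G) = 1 := by
      show invA (MonoidAlgebra.single 1 1) = 1
      rw [invA_single, inv_one]
      rfl
    rw [this, mul_one, hSS]
  have hσmul : ∀ x y, σ (x * y) = σ y * σ x := by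
    intro x y
    rw [hσ_app, hσ_app, hσ_app, invA_mul]
    calc S * (invA y * invA x) * S
        = S * (invA y * ((S * S) * (invA x * S))) := by
          rw [hSS, one_mul]; simp only [mul_assoc]
      _ = (S * invA y * S) * (S * invA x * S) := by simp only [mul_assoc]
  have hinvS : invA S = S := by
    rw [hSdef]
    show invA (MonoidAlgebra.single t 1) = MonoidAlgebra.single t 1
    rw [invA_single, inv_eq_of_mul_eq_one_left ht]
  have hσσ : ∀ x, σ (σ x) = x := by
    intro x
    rw [hσ_app, hσ_app, invA_mul, invA_mul, hinvS, invA_invA]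
    calc S * (S * (x * S)) * S
        = (S * S) * x * (S * S) := by simp only [mul_assoc]
      _ = x := by rw [hSS, one_mul, mul_one]
  -- adjointness
  have hσsingle : ∀ (g : G) (cc : k),
      σ (MonoidAlgebra.single g cc) = MonoidAlgebra.single (t * g⁻¹ * t) cc := by
    intro g cc
    rw [hσ_app, invA_single, hSdef, MonoidAlgebra.single_mul_single,
      MonoidAlgebra.single_mul_single, one_mul, mul_one]
  have hadj : ∀ (x : MonoidAlgebra k G) (w v : M),
      B (ρ t v) (ρ.asAlgebraHom x w) = B (ρ t (ρ.asAlgebraHom (σ x) v)) w := by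
    intro x
    induction x using MonoidAlgebra.induction_linear with
    | zero =>
      intro w v
      rw [hσ0, map_zero]
      simp
    | add f g hf hg =>
      intro w v
      calc B (ρ t v) (ρ.asAlgebraHom (f + g) w)
          = B (ρ t v) (ρ.asAlgebraHom f w) + B (ρ t v) (ρ.asAlgebraHom g w) := by
            rw [map_add]
            simp [LinearMap.add_apply]
        _ = B (ρ t (ρ.asAlgebraHom (σ f) v)) w + B (ρ t (ρ.asAlgebraHom (σ g) v)) w := by
            rw [hf w v, hg w v]
        _ = B (ρ t (ρ.asAlgebraHom (σ (f + g)) v)) w := by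
            rw [hσadd, map_add]
            simp [LinearMap.add_apply, map_add]
    | single g cc =>
      intro w v
      rw [hσsingle]
      rw [Representation.asAlgebraHom_single, Representation.asAlgebraHom_single]
      simp only [LinearMap.smul_apply, map_smul, smul_eq_mul]
      congr 1
      -- B (ρ t v) (ρ g w) = B (ρ t (ρ (t * g⁻¹ * t) v)) w
      have h1 : ρ t (ρ (t * g⁻¹ * t) v) = ρ (g⁻¹ * t) v := by
        have : ρ t * ρ (t * g⁻¹ * t) = ρ (t * (t * g⁻¹ * t)) := (map_mul ρ _ _).symm
        calc ρ t (ρ (t * g⁻¹ * t) v) = (ρ t * ρ (t * g⁻¹ * t)) v := rfl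
          _ = ρ (t * (t * g⁻¹ * t)) v := by rw [this]
          _ = ρ (g⁻¹ * t) v := by
              congr 2
              rw [← mul_assoc, ← mul_assoc, ht, one_mul]
      rw [h1]
      have h2 : ρ g (ρ (g⁻¹ * t) v) = ρ t v := by
        have hmm2 : ρ g * ρ (g⁻¹ * t) = ρ (g * (g⁻¹ * t)) := (map_mul ρ g (g⁻¹ * t)).symm
        calc ρ g (ρ (g⁻¹ * t) v) = (ρ g * ρ (g⁻¹ * t)) v := rfl
          _ = ρ (g * (g⁻¹ * t)) v := by rw [hmm2]
          _ = ρ t v := by rw [← mul_assoc, mul_inv_cancel, one_mul]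
      calc B (ρ t v) (ρ g w) = B (ρ g (ρ (g⁻¹ * t) v)) (ρ g w) := by rw [h2]
        _ = B (ρ (g⁻¹ * t) v) w := hinv g _ _
  have hpadj : ∀ x : MonoidAlgebra k G,
      ρ.asAlgebraHom x = p → ρ.asAlgebraHom (σ x) = p := by
    intro x hx
    apply LinearMap.ext
    intro v
    have hz : ∀ w, B (ρ t (ρ.asAlgebraHom (σ x) v)) w = B (ρ t (p v)) w := by
      intro w
      rw [← hadj x w v, hx]
      -- B (ρ t v) (p w) = B (ρ t (p v)) w
      rw [hp_apply, hp_apply, map_smul, map_smul]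
      simp only [LinearMap.smul_apply, map_smul, smul_eq_mul]
      rw [hDsym v m]
      have hconv : ∀ x : M, B (ρ t m) x = s⁻¹ * B (ρ t m₀) x := by
        intro x
        rw [hmdef, map_smul, map_smul]
        simp only [LinearMap.smul_apply, smul_eq_mul]
      rw [hconv v, hconv w]
      ring
    have hz2 : ∀ w, B (ρ t (ρ.asAlgebraHom (σ x) v) - ρ t (p v)) w = 0 := by
      intro w
      rw [map_sub, LinearMap.sub_apply, hz, sub_self]
    have hz3 := hnd _ hz2
    have hz4 : ρ t (ρ.asAlgebraHom (σ x) v - p v) = 0 := by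
      rw [map_sub]; exact hz3
    have hz5 := congrArg (ρ t) hz4
    rw [htt, map_zero] at hz5
    exact sub_eq_zero.mp hz5
  -- integrality
  haveI hfd : Module.Finite k (MonoidAlgebra k G) := by
    have e := Finsupp.linearEquivFunOnFinite k k G
    exact Module.Finite.equiv ((e.symm.trans (MonoidAlgebra.coeffLinearEquiv k).symm) : (G → k) ≃ₗ[k] MonoidAlgebra k G)
  have hint : ∀ b : MonoidAlgebra k G, IsIntegral k b := fun b => IsIntegral.of_finite k b
  -- the set of good idempotents and minimization
  set GOOD : Set (MonoidAlgebra k G) :=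
    {e | e * e = e ∧ σ e = e ∧ ρ.asAlgebraHom e = p} with hGOODdef
  have hGOODne : GOOD.Nonempty := by
    obtain ⟨e', y, h1, h2, h3, _, _, _⟩ := mk_idem ρ.asAlgebraHom σ hσmul hσadd hσsmul hσσ hσ1
      hint p hpp hpadj 1 u (one_mul 1) hσ1 (one_mul u) (mul_one u) hu
    exact ⟨e', h1, h2, h3⟩
  set rk : MonoidAlgebra k G → ℕ :=
    fun e => Module.finrank k (LinearMap.range (LinearMap.mulRight k e)) with hrkdef
  have hNSne : (rk '' GOOD).Nonempty := hGOODne.image rk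
  obtain ⟨f, hfGOOD, hfrk⟩ := Nat.sInf_mem hNSne
  obtain ⟨hff, hσf, hφf⟩ := hfGOOD
  -- p-corner is one dimensional
  have hscal : ∀ T : Module.End k M, p * T * p = (B (ρ t m) (T m)) • p := by
    intro T
    apply LinearMap.ext
    intro x
    show p (T (p x)) = (B (ρ t m) (T m)) • p x
    simp only [hp_apply, map_smul, smul_eq_mul, LinearMap.smul_apply, smul_smul]
    rw [mul_comm]
  have hp_smul_inj : ∀ cc : k, cc • p = 0 → cc = 0 := by
    intro cc h
    have h2 : (cc • p) m = 0 := by rw [h]; rfl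
    rw [LinearMap.smul_apply, hpm] at h2
    rcases smul_eq_zero.mp h2 with h3 | h3
    · exact h3
    · exact absurd h3 hm0
  refine ⟨f, hff, ?_, ?_, ⟨m, ?_⟩, ?_⟩
  · -- f ≠ 0
    intro h
    apply hp0
    rw [← hφf, h, map_zero]
  · -- primitivity
    intro e₁ e₂ h11 h22 h12 h21 hsum
    by_contra hcon
    push_neg at hcon
    obtain ⟨h1ne, h2ne⟩ := hcon
    have he1f : e₁ * f = e₁ := by rw [← hsum, mul_add, h11, h12, add_zero]
    have hfe1 : f * e₁ = e₁ := by rw [← hsum, add_mul, h11, h21, add_zero]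
    have he2f : e₂ * f = e₂ := by rw [← hsum, mul_add, h21, h22, zero_add]
    have hfe2 : f * e₂ = e₂ := by rw [← hsum, add_mul, h12, h22, zero_add]
    have hq : ∀ e' : MonoidAlgebra k G, f * e' = e' → e' * f = e' →
        ρ.asAlgebraHom e' = (B (ρ t m) (ρ.asAlgebraHom e' m)) • p := by
      intro e' hl hr
      have h1 : e' = f * e' * f := by rw [hl, hr]
      calc ρ.asAlgebraHom e'
          = ρ.asAlgebraHom (f * e' * f) := by rw [← h1]
        _ = p * ρ.asAlgebraHom e' * p := by rw [map_mul, map_mul, hφf]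
        _ = (B (ρ t m) (ρ.asAlgebraHom e' m)) • p := hscal _
    set c₁ := B (ρ t m) (ρ.asAlgebraHom e₁ m) with hc₁
    set c₂ := B (ρ t m) (ρ.asAlgebraHom e₂ m) with hc₂
    have hq1 : ρ.asAlgebraHom e₁ = c₁ • p := hq e₁ hfe1 he1f
    have hq2 : ρ.asAlgebraHom e₂ = c₂ • p := hq e₂ hfe2 he2f
    have hsumc : (c₁ + c₂) • p = p := by
      rw [add_smul, ← hq1, ← hq2, ← map_add, hsum, hφf]
    have hprod : (c₁ * c₂) • p = 0 := by
      have : ρ.asAlgebraHom (e₁ * e₂) = (c₁ * c₂) • p := by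
        rw [map_mul, hq1, hq2, smul_mul_assoc, mul_smul_comm, hpp, smul_smul]
      rw [← this, h12, map_zero]
    have hcc : c₁ * c₂ = 0 := hp_smul_inj _ hprod
    have hsum1 : c₁ + c₂ = 1 := by
      have h2 : ((c₁ + c₂) - 1) • p = 0 := by
        rw [sub_smul, one_smul, hsumc, sub_self]
      exact sub_eq_zero.mp (hp_smul_inj _ h2)
    -- the common contradiction
    have contra : ∀ E₁ E₂ : MonoidAlgebra k G, ρ.asAlgebraHom E₁ = p → E₂ ≠ 0 →
        E₂ * E₁ = 0 → E₂ * f = E₂ → f * E₁ = E₁ → E₁ * f = E₁ → False := by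
      intro E₁ E₂ hφE hne hEE hE2f hfE1 hE1f
      obtain ⟨e', y, h'1, h'2, h'3, h'4, h'5, h'6⟩ := mk_idem ρ.asAlgebraHom σ hσmul hσadd
        hσsmul hσσ hσ1 hint p hpp hpadj f E₁ hff hσf hfE1 hE1f hφE
      have hne' : e' ≠ f := by
        intro h
        apply hne
        have h2 : E₂ * e' = 0 := by rw [h'6, ← mul_assoc, hEE, zero_mul]
        rw [h] at h2
        rw [← hE2f, h2]
      have hle : LinearMap.range (LinearMap.mulRight k e')
          ≤ LinearMap.range (LinearMap.mulRight k f) := by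
        rintro z ⟨y', rfl⟩
        refine ⟨y' * e', ?_⟩
        show (y' * e') * f = y' * e'
        rw [mul_assoc, h'5]
      have hlt : rk e' < rk f := by
        rcases lt_or_eq_of_le (Submodule.finrank_mono hle) with h | h
        · exact h
        · exfalso
          apply hne'
          have heq := Submodule.eq_of_le_of_finrank_eq hle h
          have hfmem : f ∈ LinearMap.range (LinearMap.mulRight k f) :=
            ⟨f, by show f * f = f; exact hff⟩
          rw [← heq] at hfmem
          obtain ⟨z, hz⟩ := hfmem
          have hz' : z * e' = f := hz
          have h1 : f * e' = f := by
            rw [← hz', mul_assoc, h'1]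
          rw [← h'4, h1]
      have hmem : rk e' ∈ rk '' GOOD := ⟨e', ⟨h'1, h'2, h'3⟩, rfl⟩
      have := Nat.sInf_le hmem
      omega
    rcases mul_eq_zero.mp hcc with h0 | h0
    · -- c₁ = 0, so φ e₂ = p, e₁ ≠ 0
      have hc2 : c₂ = 1 := by rw [← hsum1, h0, zero_add]
      have hφe2 : ρ.asAlgebraHom e₂ = p := by rw [hq2, hc2, one_smul]
      exact contra e₂ e₁ hφe2 h1ne h12 he1f hfe2 he2f
    · -- c₂ = 0
      have hc1 : c₁ = 1 := by rw [← hsum1, h0, add_zero]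
      have hφe1 : ρ.asAlgebraHom e₁ = p := by rw [hq1, hc1, one_smul]
      exact contra e₁ e₂ hφe1 h2ne h21 he2f hfe1 he1f
  · -- f acts nontrivially
    rw [hφf]
    rw [hpm]
    exact hm0
  · -- non-degeneracy
    intro x hx
    simp only [MonoidAlgebra.of_apply] at hx
    -- step 1: (x * f * S) * invA f = 0
    have hz : (x * f * S) * invA f = 0 := by
      ext s'
      rw [conv_apply, MonoidAlgebra.coeff_zero, Finsupp.zero_apply]
      have h1 := hx (MonoidAlgebra.single s' 1)
      rw [← h1]
      apply Finset.sum_congr rfl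
      intro g _
      congr 1
      rw [invA_apply, MonoidAlgebra.coeff_single_mul_apply, one_mul, mul_inv_rev, inv_inv]
    -- step 2: S * invA f = f * S
    have hσf' : S * invA f = f * S := by
      have h' := congrArg (fun z => z * S) hσf
      calc S * invA f = S * invA f * (S * S) := by rw [hSS, mul_one]
        _ = (S * invA f * S) * S := by simp only [mul_assoc]
        _ = f * S := h'
    have hz2 : x * f * S = 0 := by
      have h3 : (x * f * S) * invA f = x * f * S * invA f := rfl
      have h4 : x * f * (S * invA f) = 0 := by
        rw [← mul_assoc, hz]
      rw [hσf', ← mul_assoc, mul_assoc x f f, hff] at h4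
      exact h4
    have h5 := congrArg (fun z => z * S) hz2
    simp only [zero_mul] at h5
    rw [mul_assoc, hSS, mul_one] at h5
    exact h5
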